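/- Let d = 2 and q small. The mean hitting time of {η(0) = 0} for the stationary FA1f process on ℤ² satisfies E_μ(τ_0) ≥ C q^{−2} log(1/q). -/

import Mathlib

open Finset ENNReal

noncomputable section

/-- The configuration `η` flipped at the site `x`. -/
def flipCfg {d : ℕ} (η : (Fin d → ℤ) → Bool) (x : Fin d → ℤ) : (Fin d → ℤ) → Bool :=
  fun y => if y = x then !(η y) else η y

/-- The nearest neighbours of a site `x ∈ ℤ^d`. -/
def latNbrs {d : ℕ} (x : Fin d → ℤ) : Finset (Fin d → ℤ) :=
  Finset.univ.biUnion fun i : Fin d =>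
    {Function.update x i (x i + 1), Function.update x i (x i - 1)}

/-- Extension of a configuration on a finite set of sites by fully occupied outside. -/
def extendCfg {d : ℕ} (s : Finset (Fin d → ℤ)) (η : ↥s → Bool) : (Fin d → ℤ) → Bool :=
  fun x => if h : x ∈ s then η ⟨x, h⟩ else true

/-- Expectation, under the product Bernoulli(1−q) measure (`true` = occupied, probability
`1−q`; `false` = empty, probability `q`), of a function depending only on the sites in the
finite set `s`. -/
def Eloc {d : ℕ} (q : ℝ) (s : Finset (Fin d → ℤ)) (g : ((Fin d → ℤ) → Bool) → ℝ) : ℝ :=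
  ∑ η : ↥s → Bool, (∏ v : ↥s, if η v then (1 - q) else q) * g (extendCfg s η)

/-- The FA1f constraint at `x` (as a real indicator): some nearest neighbour of `x` is empty. -/
def cInd {d : ℕ} (η : (Fin d → ℤ) → Bool) (x : Fin d → ℤ) : ℝ :=
  if ∃ y ∈ latNbrs x, η y = false then 1 else 0

/-- The FA1f Dirichlet form `D(f) = q(1−q) Σ_x μ(c_x (f(η^x) − f(η))²)` of a function `f`
depending only on the sites in the finite set `s`. -/
def Dform {d : ℕ} (q : ℝ) (s : Finset (Fin d → ℤ)) (f : ((Fin d → ℤ) → Bool) → ℝ) : ℝ :=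
  q * (1 - q) * ∑' x : Fin d → ℤ,
    Eloc q (s ∪ insert x (latNbrs x))
      (fun η => cInd η x * (f (flipCfg η x) - f η) ^ 2)

/-- `f` depends only on the sites in `s`. -/
def localOn {d : ℕ} (s : Finset (Fin d → ℤ)) (f : ((Fin d → ℤ) → Bool) → ℝ) : Prop :=
  ∀ η η' : (Fin d → ℤ) → Bool, (∀ x ∈ s, η x = η' x) → f η = f η'

/-- Variance of a function depending only on the sites in `s`. -/
def Varloc {d : ℕ} (q : ℝ) (s : Finset (Fin d → ℤ)) (f : ((Fin d → ℤ) → Bool) → ℝ) : ℝ :=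
  Eloc q s fun η => (f η - Eloc q s f) ^ 2

/-- The mean hitting time `E_μ(τ_0)` of the event `{η(0) = 0}` for the stationary FA1f
process on `ℤ^d`, via the variational principle
`E_μ(τ_0) = sup{μ(f)²/D(f) : f local, f = 0 on {η(0) = 0}}`. -/
def hitTime (d : ℕ) (q : ℝ) : ℝ≥0∞ :=
  sSup {r : ℝ≥0∞ | ∃ (s : Finset (Fin d → ℤ)) (f : ((Fin d → ℤ) → Bool) → ℝ),
    localOn s f ∧ (∀ η, η (fun _ => 0) = false → f η = 0) ∧
    r = ENNReal.ofReal (Eloc q s f ^ 2) / ENNReal.ofReal (Dform q s f)}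

abbrev Zd := Fin 2 → ℤ

def nrm (x : Zd) : ℕ := (x 0).natAbs + (x 1).natAbs

def ball (r : ℕ) : Finset Zd :=
  (Finset.Icc (fun _ => -(r:ℤ) : Zd) (fun _ => (r:ℤ))).filter (fun x => nrm x ≤ r)

lemma mem_ball {r : ℕ} {x : Zd} : x ∈ ball r ↔ nrm x ≤ r := by
  constructor
  · intro h; exact (Finset.mem_filter.1 h).2
  · intro h
    have h0 : (x 0).natAbs ≤ r ∧ (x 1).natAbs ≤ r := by
      simp only [nrm] at h; omega
    refine Finset.mem_filter.2 ⟨Finset.mem_Icc.2 ⟨?_, ?_⟩, h⟩ <;>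
      (rw [Pi.le_def]; intro i; fin_cases i)
    · show -(r:ℤ) ≤ x 0; omega
    · show -(r:ℤ) ≤ x 1; omega
    · show x 0 ≤ (r:ℤ); omega
    · show x 1 ≤ (r:ℤ); omega

lemma ball_subset {r r' : ℕ} (h : r ≤ r') : ball r ⊆ ball r' := by
  intro x hx; rw [mem_ball] at hx ⊢; omega

lemma zero_mem_ball (r : ℕ) : (fun _ => 0 : Zd) ∈ ball r := by
  rw [mem_ball]; simp [nrm]

lemma card_ball_le (r : ℕ) : (ball r).card ≤ (2*r+1)^2 := by
  refine le_trans (Finset.card_le_card (Finset.filter_subset _ _)) ?_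
  rw [Pi.card_Icc]
  simp only [Int.card_Icc]
  rw [Finset.prod_const]
  simp only [Finset.card_univ, Fintype.card_fin]
  have : ((r:ℤ) + 1 - -(r:ℤ)).toNat = 2*r+1 := by omega
  rw [this]

lemma latNbrs_facts {x y : Zd} (h : y ∈ latNbrs x) : y ≠ x ∧ nrm y ≤ nrm x + 1 := by
  rw [latNbrs, Finset.mem_biUnion] at h
  obtain ⟨i, -, hi⟩ := h
  rw [Finset.mem_insert, Finset.mem_singleton] at hi
  have : ∃ v : ℤ, (v = x i + 1 ∨ v = x i - 1) ∧ y = Function.update x i v := by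
    rcases hi with h | h
    · exact ⟨x i + 1, Or.inl rfl, h⟩
    · exact ⟨x i - 1, Or.inr rfl, h⟩
  obtain ⟨v, hv, rfl⟩ := this
  constructor
  · intro hc
    have h2 := congrFun hc i
    rw [Function.update_self] at h2
    omega
  · have hi : i = 0 ∨ i = 1 := by
      fin_cases i
      · exact Or.inl rfl
      · exact Or.inr rfl
    rcases hi with rfl | rfl <;>
      · simp only [nrm, Function.update_apply]
        norm_num
        omega

lemma card_latNbrs_le (x : Zd) : (latNbrs x).card ≤ 4 := by
  refine le_trans Finset.card_biUnion_le ?_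
  have h : ∀ i : Fin 2,
      ({Function.update x i (x i + 1), Function.update x i (x i - 1)} : Finset Zd).card ≤ 2 :=
    fun i => (Finset.card_insert_le _ _).trans (by simp)
  calc ∑ i : Fin 2, ({Function.update x i (x i + 1), Function.update x i (x i - 1)} : Finset Zd).card
      ≤ ∑ _i : Fin 2, 2 := Finset.sum_le_sum (fun i _ => h i)
    _ = 4 := by simp

lemma sphere_card (ℓ a : ℕ) : (((ball ℓ)).filter (fun x => nrm x = a)).card ≤ 4*a+2 := by
  have h := Finset.card_le_card_of_injOn
    (f := fun x : Zd => (x 0, decide (0 ≤ x 1)))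
    (s := (ball ℓ).filter (fun x => nrm x = a))
    (t := (Finset.Icc (-(a:ℤ)) (a:ℤ)) ×ˢ (Finset.univ : Finset Bool))
    ?_ ?_
  · refine h.trans ?_
    rw [Finset.card_product, Int.card_Icc]
    simp only [Finset.card_univ, Fintype.card_bool]
    omega
  · intro x hx
    rw [Finset.mem_coe, Finset.mem_filter] at hx
    have hn : nrm x = a := hx.2
    simp only [Finset.mem_coe, Finset.mem_product, Finset.mem_Icc]
    refine ⟨⟨?_, ?_⟩, Finset.mem_univ _⟩ <;> simp only [nrm] at hn <;> omega
  · intro x hx y hy hxy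
    rw [Finset.mem_coe, Finset.mem_filter] at hx hy
    have h0 : x 0 = y 0 := (Prod.ext_iff.1 hxy).1
    have h1 : decide (0 ≤ x 1) = decide (0 ≤ y 1) := (Prod.ext_iff.1 hxy).2
    have h1' : (0 ≤ x 1) ↔ (0 ≤ y 1) := by
      rwa [decide_eq_decide] at h1
    have hnx : nrm x = a := hx.2
    have hny : nrm y = a := hy.2
    simp only [nrm] at hnx hny
    funext i; fin_cases i
    · show x 0 = y 0; exact h0
    · show x 1 = y 1; omega

lemma weight_nonneg {d : ℕ} {q : ℝ} (h0 : 0 ≤ q) (h1 : q ≤ 1) {s : Finset (Fin d → ℤ)}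
    (η : ↥s → Bool) : 0 ≤ ∏ v : ↥s, if η v then (1 - q) else q := by
  apply Finset.prod_nonneg
  intro v _
  split <;> linarith

lemma Eloc_mono {d : ℕ} {q : ℝ} (h0 : 0 ≤ q) (h1 : q ≤ 1) {s : Finset (Fin d → ℤ)}
    {g g' : ((Fin d → ℤ) → Bool) → ℝ} (h : ∀ ξ, g ξ ≤ g' ξ) :
    Eloc q s g ≤ Eloc q s g' := by
  apply Finset.sum_le_sum
  intro η _
  exact mul_le_mul_of_nonneg_left (h _) (weight_nonneg h0 h1 η)

lemma Eloc_nonneg {d : ℕ} {q : ℝ} (h0 : 0 ≤ q) (h1 : q ≤ 1) {s : Finset (Fin d → ℤ)}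
    {g : ((Fin d → ℤ) → Bool) → ℝ} (h : ∀ ξ, 0 ≤ g ξ) : 0 ≤ Eloc q s g := by
  apply Finset.sum_nonneg
  intro η _
  exact mul_nonneg (weight_nonneg h0 h1 η) (h _)

lemma Eloc_eq_zero {d : ℕ} {q : ℝ} {s : Finset (Fin d → ℤ)}
    {g : ((Fin d → ℤ) → Bool) → ℝ} (h : ∀ ξ, g ξ = 0) : Eloc q s g = 0 := by
  unfold Eloc
  simp only [h, mul_zero, Finset.sum_const_zero]

lemma Eloc_finset_sum {d : ℕ} {q : ℝ} {s : Finset (Fin d → ℤ)} {ι : Type*} (A : Finset ι)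
    (F : ι → ((Fin d → ℤ) → Bool) → ℝ) :
    Eloc q s (fun ξ => ∑ r ∈ A, F r ξ) = ∑ r ∈ A, Eloc q s (F r) := by
  unfold Eloc
  simp_rw [Finset.mul_sum]
  rw [Finset.sum_comm]

lemma Eloc_const_mul {d : ℕ} {q : ℝ} {s : Finset (Fin d → ℤ)} (k : ℝ)
    (g : ((Fin d → ℤ) → Bool) → ℝ) :
    Eloc q s (fun ξ => k * g ξ) = k * Eloc q s g := by
  unfold Eloc
  rw [Finset.mul_sum]
  apply Finset.sum_congr rfl
  intro η _
  ring

lemma sum_prod_bool {ι : Type*} [Fintype ι] [DecidableEq ι] (g : ι → Bool → ℝ) :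
    ∑ η : ι → Bool, ∏ v, g v (η v) = ∏ v, (g v true + g v false) := by
  have h1 : ∀ v : ι, g v true + g v false = ∑ b : Bool, g v b := by
    intro v; rw [Fintype.sum_bool]
  simp_rw [h1]
  rw [Finset.prod_univ_sum]
  rw [Fintype.piFinset_univ]

lemma Eloc_prod {d : ℕ} {q : ℝ} {s : Finset (Fin d → ℤ)} (G : ↥s → Bool → ℝ) :
    Eloc q s (fun ξ => ∏ v : ↥s, G v (ξ ↑v)) =
      ∏ v : ↥s, ((1 - q) * G v true + q * G v false) := by
  unfold Eloc
  have key : ∀ η : ↥s → Bool,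
      ((∏ v : ↥s, if η v then (1 - q) else q) * ∏ v : ↥s, G v (extendCfg s η ↑v)) =
        ∏ v : ↥s, (fun b => (if b then (1 - q) else q) * G v b) (η v) := by
    intro η
    rw [← Finset.prod_mul_distrib]
    apply Finset.prod_congr rfl
    intro v _
    have he : extendCfg s η ↑v = η v := by
      simp only [extendCfg, Subtype.coe_eta]
      exact dif_pos v.2
    rw [he]
  simp_rw [key]
  rw [sum_prod_bool (fun v b => (if b then (1 - q) else q) * G v b)]
  simp

lemma prod_coe_filter {d : ℕ} {s t : Finset (Fin d → ℤ)} (hts : t ⊆ s)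
    (F : (Fin d → ℤ) → ℝ) :
    ∏ v ∈ Finset.univ.filter (fun v : ↥s => (v : Fin d → ℤ) ∈ t), F ↑v = ∏ z ∈ t, F z := by
  apply Finset.prod_bij (fun (v : ↥s) _ => (v : Fin d → ℤ))
  · intro a ha; exact (Finset.mem_filter.1 ha).2
  · intro a _ b _ h; exact Subtype.ext h
  · intro z hz; exact ⟨⟨z, hts hz⟩, Finset.mem_filter.2 ⟨Finset.mem_univ _, hz⟩, rfl⟩
  · intros; rfl

lemma card_coe_filter {d : ℕ} {s t : Finset (Fin d → ℤ)} (hts : t ⊆ s) :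
    (Finset.univ.filter (fun v : ↥s => (v : Fin d → ℤ) ∈ t)).card = t.card := by
  apply Finset.card_bij (fun (v : ↥s) _ => (v : Fin d → ℤ))
  · intro a ha; exact (Finset.mem_filter.1 ha).2
  · intro a _ b _ h; exact Subtype.ext h
  · intro z hz; exact ⟨⟨z, hts hz⟩, Finset.mem_filter.2 ⟨Finset.mem_univ _, hz⟩, rfl⟩

lemma Eloc_occ {d : ℕ} {q : ℝ} {s t : Finset (Fin d → ℤ)} (hts : t ⊆ s) :
    Eloc q s (fun ξ => if ∀ z ∈ t, ξ z = true then (1:ℝ) else 0) = (1 - q) ^ t.card := by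
  have h1 : ∀ ξ : (Fin d → ℤ) → Bool,
      (if ∀ z ∈ t, ξ z = true then (1:ℝ) else 0) =
        ∏ v : ↥s, (if (v : Fin d → ℤ) ∈ t then (if ξ ↑v = true then (1:ℝ) else 0) else 1) := by
    intro ξ
    rw [← Finset.prod_filter]
    rw [prod_coe_filter hts (fun z => if ξ z = true then (1:ℝ) else 0)]
    rw [Finset.prod_boole]
  set G : ↥s → Bool → ℝ :=
    fun v b => if (v : Fin d → ℤ) ∈ t then (if b then (1:ℝ) else 0) else 1 with hG
  have e1 : Eloc q s (fun ξ => if ∀ z ∈ t, ξ z = true then (1:ℝ) else 0)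
      = Eloc q s (fun ξ => ∏ v : ↥s, G v (ξ ↑v)) := by
    apply congrArg; funext ξ; exact h1 ξ
  rw [e1, Eloc_prod G]
  calc ∏ v : ↥s, ((1 - q) * G v true + q * G v false)
      = ∏ v : ↥s, (if (v : Fin d → ℤ) ∈ t then (1 - q) else 1) := by
        apply Finset.prod_congr rfl
        intro v _
        rw [hG]
        simp only
        split <;> norm_num
    _ = (1 - q) ^ t.card := by
        rw [← Finset.prod_filter]
        rw [Finset.prod_const, card_coe_filter hts]

lemma Eloc_vac {d : ℕ} {q : ℝ} {s : Finset (Fin d → ℤ)} {y : Fin d → ℤ} (hy : y ∈ s) :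
    Eloc q s (fun ξ => if ξ y = false then (1:ℝ) else 0) = q := by
  have hfilt : Finset.univ.filter (fun v : ↥s => (v : Fin d → ℤ) = y) = {⟨y, hy⟩} := by
    ext v
    simp [Subtype.ext_iff]
  have h1 : ∀ ξ : (Fin d → ℤ) → Bool,
      (if ξ y = false then (1:ℝ) else 0) =
        ∏ v : ↥s, (if (v : Fin d → ℤ) = y then (if ξ ↑v = true then (0:ℝ) else 1) else 1) := by
    intro ξ
    rw [← Finset.prod_filter, hfilt, Finset.prod_singleton]
    cases h : ξ y <;> simp [h]
  set G : ↥s → Bool → ℝ :=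
    fun v b => if (v : Fin d → ℤ) = y then (if b then (0:ℝ) else 1) else 1 with hG
  have e1 : Eloc q s (fun ξ => if ξ y = false then (1:ℝ) else 0)
      = Eloc q s (fun ξ => ∏ v : ↥s, G v (ξ ↑v)) := by
    apply congrArg; funext ξ; exact h1 ξ
  rw [e1, Eloc_prod G]
  calc ∏ v : ↥s, ((1 - q) * G v true + q * G v false)
      = ∏ v : ↥s, (if (v : Fin d → ℤ) = y then q else 1) := by
        apply Finset.prod_congr rfl
        intro v _
        rw [hG]
        simp only
        split <;> norm_num
    _ = q := by
        rw [← Finset.prod_filter, hfilt, Finset.prod_singleton]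
def cc (r : ℕ) : ℝ := Real.log ((r:ℝ) + 2) - Real.log ((r:ℝ) + 1)

lemma cc_nonneg (r : ℕ) : 0 ≤ cc r := by
  have := Real.log_le_log (by positivity : (0:ℝ) < (r:ℝ) + 1) (by linarith : ((r:ℝ) + 1) ≤ (r:ℝ) + 2)
  unfold cc; linarith

lemma cc_le (r : ℕ) : cc r ≤ 1 / ((r:ℝ) + 1) := by
  have h1 : (0:ℝ) < (r:ℝ) + 1 := by positivity
  have h2 : (0:ℝ) < (r:ℝ) + 2 := by positivity
  have hlog : Real.log (((r:ℝ) + 2) / ((r:ℝ) + 1)) ≤ ((r:ℝ) + 2) / ((r:ℝ) + 1) - 1 :=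
    Real.log_le_sub_one_of_pos (by positivity)
  rw [Real.log_div (by positivity) (by positivity)] at hlog
  have he : ((r:ℝ) + 2) / ((r:ℝ) + 1) - 1 = 1 / ((r:ℝ) + 1) := by
    field_simp
    norm_num
  rw [he] at hlog
  unfold cc; linarith

lemma sum_cc (n : ℕ) : ∑ r ∈ Finset.range n, cc r = Real.log ((n:ℝ) + 1) := by
  have h := Finset.sum_range_sub (fun k : ℕ => Real.log ((k:ℝ) + 1)) n
  have h2 : ∀ r ∈ Finset.range n, cc r =
      (fun k : ℕ => Real.log ((k:ℝ) + 1)) (r + 1) - (fun k : ℕ => Real.log ((k:ℝ) + 1)) r := by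
    intro r _
    simp only [cc]
    push_cast
    ring_nf
  rw [Finset.sum_congr rfl h2, h]
  simp

def indT (t : Finset Zd) (ξ : Zd → Bool) : ℝ := if ∀ z ∈ t, ξ z = true then 1 else 0

lemma indT_congr {t : Finset Zd} {ξ ξ' : Zd → Bool} (h : ∀ z ∈ t, ξ z = ξ' z) :
    indT t ξ = indT t ξ' := by
  unfold indT
  apply if_congr _ rfl rfl
  constructor <;> intro hh z hz
  · rw [← h z hz]; exact hh z hz
  · rw [h z hz]; exact hh z hz

lemma indT_eq_zero {t : Finset Zd} {ξ : Zd → Bool} {z : Zd} (hz : z ∈ t) (hf : ξ z = false) :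
    indT t ξ = 0 := by
  unfold indT
  rw [if_neg]
  intro hh
  rw [hh z hz] at hf
  exact Bool.noConfusion hf

lemma indT_mem_01 (t : Finset Zd) (ξ : Zd → Bool) : indT t ξ = 0 ∨ indT t ξ = 1 := by
  unfold indT; split
  · exact Or.inr rfl
  · exact Or.inl rfl

def ftest (ℓ : ℕ) (ξ : Zd → Bool) : ℝ := ∑ r ∈ Finset.range ℓ, cc r * indT (ball r) ξ

lemma ftest_local (ℓ : ℕ) : localOn (ball ℓ) (ftest ℓ) := by
  intro η η' h
  unfold ftest
  apply Finset.sum_congr rfl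
  intro r hr
  rw [Finset.mem_range] at hr
  have : indT (ball r) η = indT (ball r) η' :=
    indT_congr (fun z hz => h z (ball_subset (le_of_lt hr) hz))
  rw [this]

lemma ftest_vanish (ℓ : ℕ) : ∀ η : Zd → Bool, η (fun _ => 0) = false → ftest ℓ η = 0 := by
  intro η hη
  unfold ftest
  apply Finset.sum_eq_zero
  intro r _
  rw [indT_eq_zero (zero_mem_ball r) hη, mul_zero]

lemma flip_apply_ne {d : ℕ} {η : (Fin d → ℤ) → Bool} {x y : Fin d → ℤ} (h : y ≠ x) :
    flipCfg η x y = η y := if_neg h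

lemma flip_diff (ℓ : ℕ) (x : Zd) (ξ : Zd → Bool) (hcx : ∃ y ∈ latNbrs x, ξ y = false) :
    |ftest ℓ (flipCfg ξ x) - ftest ℓ ξ| ≤ cc (nrm x) := by
  obtain ⟨y, hy, hyf⟩ := hcx
  obtain ⟨hyne, hynrm⟩ := latNbrs_facts hy
  set a := nrm x with ha
  have step : ftest ℓ (flipCfg ξ x) - ftest ℓ ξ =
      ∑ r ∈ Finset.range ℓ, cc r * (indT (ball r) (flipCfg ξ x) - indT (ball r) ξ) := by
    unfold ftest
    rw [← Finset.sum_sub_distrib]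
    apply Finset.sum_congr rfl
    intro r _
    ring
  rw [step]
  refine (Finset.abs_sum_le_sum_abs _ _).trans ?_
  have hb : ∀ r ∈ Finset.range ℓ,
      |cc r * (indT (ball r) (flipCfg ξ x) - indT (ball r) ξ)| ≤
        if r = a then cc a else 0 := by
    intro r _
    by_cases hra : r = a
    · rw [hra, if_pos rfl, abs_mul, abs_of_nonneg (cc_nonneg a)]
      have h01 : |indT (ball a) (flipCfg ξ x) - indT (ball a) ξ| ≤ 1 := by
        rcases indT_mem_01 (ball a) (flipCfg ξ x) with h1 | h1 <;>
          rcases indT_mem_01 (ball a) ξ with h2 | h2 <;>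
            rw [h1, h2] <;> norm_num
      calc cc a * |indT (ball a) (flipCfg ξ x) - indT (ball a) ξ|
          ≤ cc a * 1 := mul_le_mul_of_nonneg_left h01 (cc_nonneg a)
        _ = cc a := mul_one _
    · rw [if_neg hra]
      have hΔ : indT (ball r) (flipCfg ξ x) = indT (ball r) ξ := by
        rcases Nat.lt_or_ge r a with hlt | hge
        · -- r < a : x ∉ ball r
          apply indT_congr
          intro z hz
          apply flip_apply_ne
          intro hzx
          rw [mem_ball] at hz
          rw [hzx, ← ha] at hz
          omega
        · -- r > a : y ∈ ball r and ξ y = false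
          have hra' : a < r := lt_of_le_of_ne hge (fun hh => hra hh.symm)
          have hyb : y ∈ ball r := by rw [mem_ball]; omega
          rw [indT_eq_zero hyb hyf, indT_eq_zero hyb (by rw [flip_apply_ne hyne]; exact hyf)]
      rw [hΔ]
      simp
  refine (Finset.sum_le_sum hb).trans ?_
  rw [Finset.sum_ite_eq' (Finset.range ℓ) a (fun _ => cc a)]
  split
  · exact le_refl _
  · exact cc_nonneg a
lemma hx_le (ℓ : ℕ) (x : Zd) (ξ : Zd → Bool) :
    cInd ξ x * (ftest ℓ (flipCfg ξ x) - ftest ℓ ξ) ^ 2 ≤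
      (cc (nrm x)) ^ 2 * ∑ y ∈ latNbrs x, (if ξ y = false then (1:ℝ) else 0) := by
  have hsum_nonneg : (0:ℝ) ≤ ∑ y ∈ latNbrs x, (if ξ y = false then (1:ℝ) else 0) :=
    Finset.sum_nonneg (fun y _ => by split <;> norm_num)
  unfold cInd
  split_ifs with h
  · rw [one_mul]
    have h1 := flip_diff ℓ x ξ h
    have habs := abs_le.1 h1
    have hΔ : (ftest ℓ (flipCfg ξ x) - ftest ℓ ξ) ^ 2 ≤ (cc (nrm x)) ^ 2 := by
      nlinarith [habs.1, habs.2]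
    have hsum1 : (1:ℝ) ≤ ∑ y ∈ latNbrs x, (if ξ y = false then (1:ℝ) else 0) := by
      obtain ⟨y, hy, hf⟩ := h
      have hh := Finset.single_le_sum (f := fun y => if ξ y = false then (1:ℝ) else 0)
        (fun y _ => by split <;> norm_num) hy
      rw [if_pos hf] at hh
      exact hh
    calc (ftest ℓ (flipCfg ξ x) - ftest ℓ ξ) ^ 2 ≤ (cc (nrm x))^2 := hΔ
      _ = (cc (nrm x))^2 * 1 := (mul_one _).symm
      _ ≤ _ := mul_le_mul_of_nonneg_left hsum1 (sq_nonneg _)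
  · rw [zero_mul]
    exact mul_nonneg (sq_nonneg _) hsum_nonneg

lemma term_le {q : ℝ} (h0 : 0 ≤ q) (h1 : q ≤ 1) (ℓ : ℕ) (x : Zd) :
    Eloc q ((ball ℓ) ∪ insert x (latNbrs x))
      (fun ξ => cInd ξ x * (ftest ℓ (flipCfg ξ x) - ftest ℓ ξ) ^ 2) ≤
      4 * q * (cc (nrm x)) ^ 2 := by
  refine (Eloc_mono h0 h1 (hx_le ℓ x)).trans ?_
  rw [Eloc_const_mul ((cc (nrm x))^2)
    (fun ξ => ∑ y ∈ latNbrs x, if ξ y = false then (1:ℝ) else 0)]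
  rw [Eloc_finset_sum (latNbrs x) (fun y ξ => if ξ y = false then (1:ℝ) else 0)]
  have hv : ∀ y ∈ latNbrs x,
      Eloc q ((ball ℓ) ∪ insert x (latNbrs x)) (fun ξ => if ξ y = false then (1:ℝ) else 0) = q := by
    intro y hy
    exact Eloc_vac (Finset.mem_union_right _ (Finset.mem_insert_of_mem hy))
  rw [Finset.sum_congr rfl hv, Finset.sum_const, nsmul_eq_mul]
  have hc : ((latNbrs x).card : ℝ) ≤ 4 := by exact_mod_cast card_latNbrs_le x
  have hsq := sq_nonneg (cc (nrm x))
  nlinarith [mul_nonneg (mul_nonneg (sub_nonneg.2 hc) h0) hsq]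

lemma term_nonneg {q : ℝ} (h0 : 0 ≤ q) (h1 : q ≤ 1) (ℓ : ℕ) (x : Zd) :
    0 ≤ Eloc q ((ball ℓ) ∪ insert x (latNbrs x))
      (fun ξ => cInd ξ x * (ftest ℓ (flipCfg ξ x) - ftest ℓ ξ) ^ 2) := by
  apply Eloc_nonneg h0 h1
  intro ξ
  apply mul_nonneg _ (sq_nonneg _)
  unfold cInd; split <;> norm_num

lemma term_zero (q : ℝ) (ℓ : ℕ) (x : Zd) (hx : x ∉ ball ℓ) :
    Eloc q ((ball ℓ) ∪ insert x (latNbrs x))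
      (fun ξ => cInd ξ x * (ftest ℓ (flipCfg ξ x) - ftest ℓ ξ) ^ 2) = 0 := by
  apply Eloc_eq_zero
  intro ξ
  have hf : ftest ℓ (flipCfg ξ x) = ftest ℓ ξ := by
    apply ftest_local
    intro z hz
    apply flip_apply_ne
    intro hzx
    exact hx (hzx ▸ hz)
  rw [hf, sub_self]
  ring

lemma numer_eq (q : ℝ) (ℓ : ℕ) :
    Eloc q (ball ℓ) (ftest ℓ) = ∑ r ∈ Finset.range ℓ, cc r * (1-q) ^ ((ball r).card) := by
  unfold ftest
  rw [Eloc_finset_sum (Finset.range ℓ) (fun r ξ => cc r * indT (ball r) ξ)]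
  apply Finset.sum_congr rfl
  intro r hr
  rw [Eloc_const_mul (cc r) (indT (ball r))]
  congr 1
  have hi : indT (ball r) = fun ξ => if ∀ z ∈ ball r, ξ z = true then (1:ℝ) else 0 := rfl
  rw [hi, Eloc_occ (ball_subset (le_of_lt (Finset.mem_range.1 hr)))]

lemma sum_ball_cc_sq (ℓ : ℕ) :
    ∑ x ∈ ball ℓ, (cc (nrm x)) ^ 2 ≤ 4 * Real.log ((ℓ:ℝ) + 2) := by
  have hmaps : ∀ x ∈ ball ℓ, nrm x ∈ Finset.range (ℓ+1) := by
    intro x hx; rw [Finset.mem_range]; rw [mem_ball] at hx; omega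
  rw [← Finset.sum_fiberwise_of_maps_to hmaps (fun x => (cc (nrm x))^2)]
  have hstep : ∀ a ∈ Finset.range (ℓ+1),
      ∑ x ∈ (ball ℓ).filter (fun x => nrm x = a), (cc (nrm x))^2 ≤ 4 * cc a := by
    intro a _
    have he : ∀ x ∈ (ball ℓ).filter (fun x => nrm x = a), (cc (nrm x))^2 = (cc a)^2 := by
      intro x hx; rw [(Finset.mem_filter.1 hx).2]
    rw [Finset.sum_congr rfl he, Finset.sum_const, nsmul_eq_mul]
    have hcard : ((((ball ℓ)).filter (fun x => nrm x = a)).card : ℝ) ≤ 4*(a:ℝ)+2 := by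
      have := sphere_card ℓ a
      push_cast
      exact_mod_cast this
    have h1 := cc_nonneg a
    have h2 := cc_le a
    have ha1 : (0:ℝ) < (a:ℝ) + 1 := by positivity
    have hccsq : (cc a)^2 ≤ (1/((a:ℝ)+1)) * cc a := by nlinarith
    have key : ((4:ℝ)*(a:ℝ)+2) * (1/((a:ℝ)+1)) ≤ 4 := by
      rw [mul_one_div, div_le_iff₀ ha1]; linarith
    calc ((((ball ℓ)).filter (fun x => nrm x = a)).card : ℝ) * (cc a)^2
        ≤ (4*(a:ℝ)+2) * ((1/((a:ℝ)+1)) * cc a) := by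
          apply mul_le_mul hcard hccsq (sq_nonneg _) (by positivity)
      _ = ((4*(a:ℝ)+2) * (1/((a:ℝ)+1))) * cc a := by ring
      _ ≤ 4 * cc a := mul_le_mul_of_nonneg_right key h1
  refine (Finset.sum_le_sum hstep).trans ?_
  rw [← Finset.mul_sum, sum_cc (ℓ+1)]
  have hc2 : ((ℓ+1:ℕ):ℝ) + 1 = (ℓ:ℝ) + 2 := by push_cast; ring
  rw [hc2]

lemma Dform_le {q : ℝ} (h0 : 0 ≤ q) (h1 : q ≤ 1) (ℓ : ℕ) :
    Dform q (ball ℓ) (ftest ℓ) ≤ 16 * q^2 * Real.log ((ℓ:ℝ)+2) := by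
  unfold Dform
  rw [tsum_eq_sum (s := ball ℓ) (fun x hx => term_zero q ℓ x hx)]
  have hlog : 0 ≤ Real.log ((ℓ:ℝ)+2) := by
    apply Real.log_nonneg; push_cast; linarith [Nat.cast_nonneg (α := ℝ) ℓ]
  have hS_le : ∑ x ∈ ball ℓ, Eloc q ((ball ℓ) ∪ insert x (latNbrs x))
      (fun ξ => cInd ξ x * (ftest ℓ (flipCfg ξ x) - ftest ℓ ξ)^2) ≤
      4 * q * (4 * Real.log ((ℓ:ℝ)+2)) := by
    refine (Finset.sum_le_sum (fun x _ => term_le h0 h1 ℓ x)).trans ?_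
    calc ∑ x ∈ ball ℓ, 4*q*(cc (nrm x))^2
        = 4*q * ∑ x ∈ ball ℓ, (cc (nrm x))^2 := by rw [Finset.mul_sum]
      _ ≤ 4*q*(4*Real.log ((ℓ:ℝ)+2)) :=
          mul_le_mul_of_nonneg_left (sum_ball_cc_sq ℓ) (by positivity)
  have hS_nonneg : 0 ≤ ∑ x ∈ ball ℓ, Eloc q ((ball ℓ) ∪ insert x (latNbrs x))
      (fun ξ => cInd ξ x * (ftest ℓ (flipCfg ξ x) - ftest ℓ ξ)^2) :=
    Finset.sum_nonneg (fun x _ => term_nonneg h0 h1 ℓ x)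
  nlinarith [mul_le_mul_of_nonneg_left hS_le h0,
    mul_nonneg (mul_nonneg h0 h0) hS_nonneg]

lemma numer_ge {q : ℝ} (h0 : 0 ≤ q) (h1 : q ≤ 1) (ℓ : ℕ) :
    (1-q)^((ball ℓ).card) * Real.log ((ℓ:ℝ)+1) ≤ Eloc q (ball ℓ) (ftest ℓ) := by
  rw [numer_eq q ℓ]
  have hpt : ∀ r ∈ Finset.range ℓ,
      cc r * (1-q)^((ball ℓ).card) ≤ cc r * (1-q)^((ball r).card) := by
    intro r hr
    apply mul_le_mul_of_nonneg_left _ (cc_nonneg r)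
    apply pow_le_pow_of_le_one (by linarith) (by linarith)
    exact Finset.card_le_card (ball_subset (le_of_lt (Finset.mem_range.1 hr)))
  have hsum := Finset.sum_le_sum hpt
  rw [← Finset.sum_mul, sum_cc ℓ] at hsum
  calc (1-q)^((ball ℓ).card) * Real.log ((ℓ:ℝ)+1)
      = Real.log ((ℓ:ℝ)+1) * (1-q)^((ball ℓ).card) := by ring
    _ ≤ _ := hsum

set_option maxHeartbeats 2000000 in
/-- in dimension `2`, `E_μ(τ_0) ≥ C q^{−2} log(1/q)` for small `q`. -/
theorem hitTime_ge_two_dim : ∃ C > (0 : ℝ), ∃ q₀ > (0 : ℝ), ∀ q : ℝ, 0 < q → q ≤ q₀ →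
    ENNReal.ofReal (C * q ^ (-2 : ℤ) * Real.log (1 / q)) ≤ hitTime 2 q := by
  refine ⟨Real.exp (-100) / 100, by positivity, 1/100, by norm_num, ?_⟩
  intro q hq hq0
  have hq1 : q ≤ 1 := by linarith
  have hqhalf : q ≤ 1/2 := by linarith
  set σ : ℝ := Real.sqrt (1/q) with hσdef
  have hq01 : (0:ℝ) < 1/q := by positivity
  have hσsq : σ^2 = 1/q := Real.sq_sqrt (le_of_lt hq01)
  have hσpos : 0 < σ := Real.sqrt_pos.2 hq01
  have h100 : (100:ℝ) ≤ 1/q := by rw [le_div_iff₀ hq]; linarith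
  have hσ10 : (10:ℝ) ≤ σ := by
    have h := Real.sqrt_le_sqrt h100
    rwa [show (100:ℝ) = 10^2 by norm_num, Real.sqrt_sq (by norm_num : (0:ℝ) ≤ 10)] at h
  set ℓ : ℕ := ⌈σ⌉₊ with hℓdef
  have hℓ1 : σ ≤ (ℓ:ℝ) := Nat.le_ceil σ
  have hℓ2 : (ℓ:ℝ) ≤ σ + 1 := le_of_lt (Nat.ceil_lt_add_one (le_of_lt hσpos))
  set L : ℝ := Real.log (1/q) with hLdef
  have hL : 0 < L := Real.log_pos (by rw [lt_div_iff₀ hq]; linarith)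
  -- membership in the variational set
  unfold hitTime
  have hmem : ENNReal.ofReal (Eloc q (ball ℓ) (ftest ℓ) ^ 2) /
      ENNReal.ofReal (Dform q (ball ℓ) (ftest ℓ)) ∈
      {r : ℝ≥0∞ | ∃ (s : Finset (Fin 2 → ℤ)) (f : ((Fin 2 → ℤ) → Bool) → ℝ),
        localOn s f ∧ (∀ η, η (fun _ => 0) = false → f η = 0) ∧
        r = ENNReal.ofReal (Eloc q s f ^ 2) / ENNReal.ofReal (Dform q s f)} :=
    ⟨ball ℓ, ftest ℓ, ftest_local ℓ, ftest_vanish ℓ, rfl⟩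
  refine le_trans ?_ (le_sSup hmem)
  -- numerator lower bound
  set M := (ball ℓ).card with hMdef
  have hcard : (M:ℝ) ≤ (2*(ℓ:ℝ)+1)^2 := by
    have h := card_ball_le ℓ
    have h' : (M:ℝ) ≤ ((2*ℓ+1)^2 : ℕ) := by exact_mod_cast h
    refine h'.trans ?_
    push_cast
    ring_nf
    linarith
  have h2l : 2*(ℓ:ℝ)+1 ≤ 5*σ := by linarith
  have hqM : q * (M:ℝ) ≤ 25 := by
    have h5 : (2*(ℓ:ℝ)+1)^2 ≤ 25*σ^2 := by nlinarith
    have h6 : (M:ℝ) ≤ 25*σ^2 := le_trans hcard h5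
    have hσq : σ^2 * q = 1 := by rw [hσsq]; field_simp
    nlinarith
  have hMnn : (0:ℝ) ≤ (M:ℝ) := Nat.cast_nonneg M
  have hexpq : Real.exp (-(2*q)) ≤ 1 - q := by
    have he := Real.add_one_le_exp (2*q)
    have hepos := Real.exp_pos (2*q)
    have h2 : 1 ≤ (1-q) * Real.exp (2*q) := by nlinarith
    have h4 := mul_le_mul_of_nonneg_left h2 (inv_nonneg.2 hepos.le)
    rw [mul_one] at h4
    rw [Real.exp_neg]
    calc (Real.exp (2*q))⁻¹ ≤ (Real.exp (2*q))⁻¹ * ((1-q) * Real.exp (2*q)) := h4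
      _ = 1 - q := by field_simp
  have hκ : Real.exp (-50) ≤ (1-q)^M := by
    have hstep : Real.exp (-(2*q))^M ≤ (1-q)^M :=
      pow_le_pow_left₀ (Real.exp_pos _).le hexpq M
    have he2 : Real.exp (-(2*q))^M = Real.exp ((M:ℝ) * (-(2*q))) :=
      (Real.exp_nat_mul _ M).symm
    have hexpo : Real.exp (-50) ≤ Real.exp ((M:ℝ) * (-(2*q))) :=
      Real.exp_le_exp.2 (by nlinarith)
    rw [he2] at hstep
    linarith
  have hlogℓ : L/2 ≤ Real.log ((ℓ:ℝ)+1) := by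
    have hls : Real.log σ = L/2 := by
      rw [hσdef, Real.log_sqrt (le_of_lt hq01)]
    have hmono : Real.log σ ≤ Real.log ((ℓ:ℝ)+1) := Real.log_le_log hσpos (by linarith)
    linarith
  have hN : Real.exp (-50) * (L/2) ≤ Eloc q (ball ℓ) (ftest ℓ) := by
    have hn1 := numer_ge hq.le hq1 ℓ
    calc Real.exp (-50) * (L/2)
        ≤ (1-q)^M * Real.log ((ℓ:ℝ)+1) := by
          apply mul_le_mul hκ hlogℓ (by positivity) (pow_nonneg (by linarith) M)
      _ ≤ Eloc q (ball ℓ) (ftest ℓ) := hn1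
  set N := Eloc q (ball ℓ) (ftest ℓ) with hNdef
  have hNpos : 0 < N := lt_of_lt_of_le (by positivity) hN
  -- Dirichlet upper bound
  have hlog2 : Real.log ((ℓ:ℝ)+2) ≤ L := by
    apply Real.log_le_log (by positivity)
    -- ℓ+2 ≤ 1/q
    have : (ℓ:ℝ) + 2 ≤ 2*σ := by linarith
    nlinarith
  have hD : Dform q (ball ℓ) (ftest ℓ) ≤ 16 * q^2 * L := by
    refine (Dform_le hq.le hq1 ℓ).trans ?_
    have := sq_nonneg q
    nlinarith
  set D := Dform q (ball ℓ) (ftest ℓ) with hDdef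
  -- final ENNReal computation
  have hq2 : q ^ (-2:ℤ) = (q^2)⁻¹ := by
    rw [zpow_neg, show (2:ℤ) = ((2:ℕ):ℤ) from rfl, zpow_natCast]
  have hT0 : 0 ≤ Real.exp (-100) / 100 * q ^ (-2:ℤ) * L := by
    have : (0:ℝ) < q ^ (-2:ℤ) := by rw [hq2]; positivity
    positivity
  rw [ENNReal.le_div_iff_mul_le
    (Or.inr (ne_of_gt (ENNReal.ofReal_pos.2 (pow_pos hNpos 2))))
    (Or.inl ENNReal.ofReal_ne_top)]
  rw [← ENNReal.ofReal_mul hT0]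
  apply ENNReal.ofReal_le_ofReal
  have hqq : q ^ (-2:ℤ) * q^2 = 1 := by
    rw [hq2]
    field_simp
  have hTD : Real.exp (-100) / 100 * q ^ (-2:ℤ) * L * D ≤
      Real.exp (-100) / 100 * q ^ (-2:ℤ) * L * (16 * q^2 * L) :=
    mul_le_mul_of_nonneg_left hD hT0
  have hTD2 : Real.exp (-100) / 100 * q ^ (-2:ℤ) * L * (16 * q^2 * L) =
      Real.exp (-100) / 100 * 16 * (q ^ (-2:ℤ) * q^2) * L^2 := by ring
  rw [hTD2, hqq, mul_one] at hTD
  have hNsq : (Real.exp (-50) * (L/2))^2 ≤ N^2 := by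
    apply pow_le_pow_left₀ (by positivity) hN
  have hee : (Real.exp (-50))^2 = Real.exp (-100) := by
    rw [← Real.exp_nat_mul]
    norm_num
  refine hTD.trans ?_
  have hexp100 := (Real.exp_pos (-100)).le
  nlinarith [sq_nonneg L]


end
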